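/- (Conservative covariance bounds) Define Ĉ = (1/N²)∑_{i=1}^N ∑_{j : r_{ij}>0} 1_{B_i ∩ C_j} ((r_{ij} − p_i q_j)/r_{ij}) (y_i/p_i)(z_j/q_j), where the inner sum runs over all j ∈ {1,…,N} with r_{ij} > 0, and define D̂ = (1/N²)∑_{i=1}^N ∑_{j : r_{ij}=0} [1_{B_i} y_i²/(2p_i) + 1_{C_j} z_j²/(2q_j)]. Then E[Ĉ − D̂] ≤ Cov(Ŷ, Ẑ) ≤ E[Ĉ + D̂]. -/

import Mathlib

open MeasureTheory

/-- **Conservative covariance bounds.**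
With `Ĉ` the Horvitz–Thompson covariance estimator (inner sum over all `j` with
`r_{ij} > 0`) and `D̂ = (1/N²) ∑ᵢ ∑_{j : r_{ij}=0} [1_{Bᵢ} yᵢ²/(2pᵢ) + 1_{Cⱼ} zⱼ²/(2qⱼ)]`,
one has `E[Ĉ − D̂] ≤ Cov(Ŷ, Ẑ) ≤ E[Ĉ + D̂]`, where `Cov(X,Y) = E[XY] − E[X]E[Y]`. -/
theorem conservative_covariance_bounds
    {Ω : Type*} [MeasurableSpace Ω] (P : Measure Ω) [IsProbabilityMeasure P]
    (N : ℕ) (hN : 0 < N)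
    (B C : Fin N → Set Ω) (hB : ∀ i, MeasurableSet (B i)) (hC : ∀ i, MeasurableSet (C i))
    (hBC : ∀ i, B i ∩ C i = ∅)
    (y z p q : Fin N → ℝ) (r : Fin N → Fin N → ℝ)
    (hp : ∀ i, p i = (P (B i)).toReal) (hppos : ∀ i, 0 < p i)
    (hq : ∀ i, q i = (P (C i)).toReal) (hqpos : ∀ i, 0 < q i)
    (hr : ∀ i j, r i j = (P (B i ∩ C j)).toReal)
    (Yhat Zhat Chat Dhat : Ω → ℝ)
    (hY : Yhat = fun ω =>
      (1 / (N : ℝ)) * ∑ i, (B i).indicator (fun _ => (1 : ℝ)) ω * y i / p i)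
    (hZ : Zhat = fun ω =>
      (1 / (N : ℝ)) * ∑ i, (C i).indicator (fun _ => (1 : ℝ)) ω * z i / q i)
    (hChat : Chat = fun ω =>
      (1 / (N : ℝ) ^ 2) * ∑ i, ∑ j ∈ Finset.univ.filter (fun j => 0 < r i j),
        (B i ∩ C j).indicator (fun _ => (1 : ℝ)) ω
          * ((r i j - p i * q j) / r i j) * (y i / p i) * (z j / q j))
    (hDhat : Dhat = fun ω =>
      (1 / (N : ℝ) ^ 2) * ∑ i, ∑ j ∈ Finset.univ.filter (fun j => r i j = 0),
        ((B i).indicator (fun _ => (1 : ℝ)) ω * y i ^ 2 / (2 * p i)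
          + (C j).indicator (fun _ => (1 : ℝ)) ω * z j ^ 2 / (2 * q j))) :
    (∫ ω, (Chat ω - Dhat ω) ∂P)
        ≤ (∫ ω, Yhat ω * Zhat ω ∂P) - (∫ ω, Yhat ω ∂P) * (∫ ω, Zhat ω ∂P)
      ∧ (∫ ω, Yhat ω * Zhat ω ∂P) - (∫ ω, Yhat ω ∂P) * (∫ ω, Zhat ω ∂P)
        ≤ ∫ ω, (Chat ω + Dhat ω) ∂P := by
  classical
  have hpne : ∀ i, p i ≠ 0 := fun i => (hppos i).ne'
  have hqne : ∀ i, q i ≠ 0 := fun i => (hqpos i).ne'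
  have hrnn : ∀ i j, 0 ≤ r i j := fun i j => by rw [hr]; exact ENNReal.toReal_nonneg
  -- pointwise indicator facts
  have hconst : ∀ (S : Set Ω) (c : ℝ) (ω : Ω),
      S.indicator (fun _ => (1 : ℝ)) ω * c = S.indicator (fun _ => c) ω := by
    intro S c ω; by_cases h : ω ∈ S <;> simp [h]
  have hprodc : ∀ (S T : Set Ω) (c d : ℝ) (ω : Ω),
      S.indicator (fun _ => c) ω * T.indicator (fun _ => d) ω
        = (S ∩ T).indicator (fun _ => c * d) ω := by
    intro S T c d ω
    by_cases hS : ω ∈ S <;> by_cases hT : ω ∈ T <;>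
      simp [Set.indicator_apply, hS, hT]
  -- integrability and value of indicator integrals
  have hint : ∀ (S : Set Ω), MeasurableSet S → ∀ c : ℝ,
      Integrable (fun ω => S.indicator (fun _ => c) ω) P := by
    intro S hS c
    exact (integrable_const c).indicator hS
  have hintadd : ∀ i j : Fin N,
      Integrable (fun ω => (B i).indicator (fun _ => y i ^ 2 / (2 * p i)) ω
        + (C j).indicator (fun _ => z j ^ 2 / (2 * q j)) ω) P := by
    intro i j
    exact (hint _ (hB i) _).add (hint _ (hC j) _)
  have hval : ∀ (S : Set Ω), MeasurableSet S → ∀ c : ℝ,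
      ∫ ω, S.indicator (fun _ => c) ω ∂P = (P S).toReal * c := by
    intro S hS c
    rw [integral_indicator_const c hS, smul_eq_mul]; rfl
  -- normalized forms
  have hY' : Yhat = fun ω => (1 / (N : ℝ)) * ∑ i, (B i).indicator (fun _ => y i / p i) ω := by
    rw [hY]; funext ω; congr 1
    exact Finset.sum_congr rfl fun i _ => by rw [mul_div_assoc, hconst]
  have hZ' : Zhat = fun ω => (1 / (N : ℝ)) * ∑ i, (C i).indicator (fun _ => z i / q i) ω := by
    rw [hZ]; funext ω; congr 1
    exact Finset.sum_congr rfl fun i _ => by rw [mul_div_assoc, hconst]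
  have hC' : Chat = fun ω => (1 / (N : ℝ) ^ 2) *
      ∑ i, ∑ j ∈ Finset.univ.filter (fun j => 0 < r i j),
        (B i ∩ C j).indicator
          (fun _ => ((r i j - p i * q j) / r i j) * (y i / p i) * (z j / q j)) ω := by
    rw [hChat]; funext ω; congr 1
    refine Finset.sum_congr rfl fun i _ => Finset.sum_congr rfl fun j _ => ?_
    by_cases h : ω ∈ B i ∩ C j <;> simp [Set.indicator_apply, h, mul_assoc]
  have hD' : Dhat = fun ω => (1 / (N : ℝ) ^ 2) *
      ∑ i, ∑ j ∈ Finset.univ.filter (fun j => r i j = 0),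
        ((B i).indicator (fun _ => y i ^ 2 / (2 * p i)) ω
          + (C j).indicator (fun _ => z j ^ 2 / (2 * q j)) ω) := by
    rw [hDhat]; funext ω; congr 1
    refine Finset.sum_congr rfl fun i _ => Finset.sum_congr rfl fun j _ => ?_
    rw [mul_div_assoc, mul_div_assoc, hconst, hconst]
  -- integrals of Yhat and Zhat
  have hIY : ∫ ω, Yhat ω ∂P = (1 / (N : ℝ)) * ∑ i, y i := by
    rw [hY', integral_const_mul, integral_finset_sum _ (fun i _ => hint _ (hB i) _)]
    congr 1
    refine Finset.sum_congr rfl fun i _ => ?_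
    rw [hval _ (hB i), ← hp i, mul_comm, div_mul_cancel₀ _ (hpne i)]
  have hIZ : ∫ ω, Zhat ω ∂P = (1 / (N : ℝ)) * ∑ i, z i := by
    rw [hZ', integral_const_mul, integral_finset_sum _ (fun i _ => hint _ (hC i) _)]
    congr 1
    refine Finset.sum_congr rfl fun i _ => ?_
    rw [hval _ (hC i), ← hq i, mul_comm, div_mul_cancel₀ _ (hqne i)]
  -- product
  have hYZ : (fun ω => Yhat ω * Zhat ω) = fun ω => (1 / (N : ℝ) ^ 2) *
      ∑ i, ∑ j, (B i ∩ C j).indicator (fun _ => y i / p i * (z j / q j)) ω := by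
    rw [hY', hZ']; funext ω
    rw [show ((1 / (N : ℝ)) * ∑ i, (B i).indicator (fun _ => y i / p i) ω) *
        ((1 / (N : ℝ)) * ∑ i, (C i).indicator (fun _ => z i / q i) ω)
        = (1 / (N : ℝ) ^ 2) * ((∑ i, (B i).indicator (fun _ => y i / p i) ω) *
          (∑ i, (C i).indicator (fun _ => z i / q i) ω)) from by ring]
    congr 1
    rw [Finset.sum_mul_sum]
    exact Finset.sum_congr rfl fun i _ => Finset.sum_congr rfl fun j _ => hprodc _ _ _ _ _
  have hIYZ : ∫ ω, Yhat ω * Zhat ω ∂P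
      = (1 / (N : ℝ) ^ 2) * ∑ i, ∑ j, r i j * (y i / p i * (z j / q j)) := by
    rw [hYZ, integral_const_mul,
      integral_finset_sum _ (fun i _ =>
        integrable_finset_sum _ (fun j _ => hint _ ((hB i).inter (hC j)) _))]
    congr 1
    refine Finset.sum_congr rfl fun i _ => ?_
    rw [integral_finset_sum _ (fun j _ => hint _ ((hB i).inter (hC j)) _)]
    exact Finset.sum_congr rfl fun j _ => by rw [hval _ ((hB i).inter (hC j)), ← hr i j]
  -- integrals of Chat and Dhat
  have hCint : Integrable Chat P := by
    rw [hC']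
    exact (integrable_finset_sum _ (fun i _ =>
      integrable_finset_sum _ (fun j _ => hint _ ((hB i).inter (hC j)) _))).const_mul _
  have hDint : Integrable Dhat P := by
    rw [hD']
    exact (integrable_finset_sum _ (fun i _ =>
      integrable_finset_sum _ (fun j _ => hintadd i j))).const_mul _
  have hIC : ∫ ω, Chat ω ∂P = (1 / (N : ℝ) ^ 2) *
      ∑ i, ∑ j ∈ Finset.univ.filter (fun j => 0 < r i j),
        (r i j - p i * q j) * (y i / p i) * (z j / q j) := by
    rw [hC', integral_const_mul,
      integral_finset_sum _ (fun i _ =>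
        integrable_finset_sum _ (fun j _ => hint _ ((hB i).inter (hC j)) _))]
    congr 1
    refine Finset.sum_congr rfl fun i _ => ?_
    rw [integral_finset_sum _ (fun j _ => hint _ ((hB i).inter (hC j)) _)]
    refine Finset.sum_congr rfl fun j hj => ?_
    have hrpos : 0 < r i j := (Finset.mem_filter.mp hj).2
    rw [hval _ ((hB i).inter (hC j)), ← hr i j]
    rw [show (r i j - p i * q j) / r i j * (y i / p i) * (z j / q j)
        = (r i j)⁻¹ * ((r i j - p i * q j) * (y i / p i) * (z j / q j)) from by ring,
      ← mul_assoc, mul_inv_cancel₀ hrpos.ne', one_mul]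
  have hID : ∫ ω, Dhat ω ∂P = (1 / (N : ℝ) ^ 2) *
      ∑ i, ∑ j ∈ Finset.univ.filter (fun j => r i j = 0),
        (y i ^ 2 / 2 + z j ^ 2 / 2) := by
    rw [hD', integral_const_mul,
      integral_finset_sum _ (fun i _ =>
        integrable_finset_sum _ (fun j _ => hintadd i j))]
    congr 1
    refine Finset.sum_congr rfl fun i _ => ?_
    rw [integral_finset_sum _ (fun j _ => hintadd i j)]
    refine Finset.sum_congr rfl fun j _ => ?_
    rw [integral_add (hint _ (hB i) _) (hint _ (hC j) _), hval _ (hB i), hval _ (hC j),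
      ← hp i, ← hq j]
    have hp0 := hpne i
    have hq0 := hqne j
    field_simp
  -- covariance split
  have hsplit : ∀ i : Fin N, ∑ j, (r i j * (y i / p i * (z j / q j)) - y i * z j)
      = (∑ j ∈ Finset.univ.filter (fun j => 0 < r i j),
          (r i j - p i * q j) * (y i / p i) * (z j / q j))
        + ∑ j ∈ Finset.univ.filter (fun j => r i j = 0), -(y i * z j) := by
    intro i
    rw [← Finset.sum_filter_add_sum_filter_not Finset.univ (fun j => 0 < r i j)]
    congr 1
    · refine Finset.sum_congr rfl fun j _ => ?_
      have hp0 := hpne i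
      have hq0 := hqne j
      field_simp
    · have hfe : Finset.univ.filter (fun j => ¬ 0 < r i j)
          = Finset.univ.filter (fun j => r i j = 0) := by
        refine Finset.filter_congr fun j _ => ?_
        constructor
        · intro h; exact le_antisymm (not_lt.mp h) (hrnn i j)
        · intro h; rw [h]; exact lt_irrefl 0
      rw [hfe]
      refine Finset.sum_congr rfl fun j hj => ?_
      have h0 : r i j = 0 := (Finset.mem_filter.mp hj).2
      rw [h0]; ring
  have hCov : (∫ ω, Yhat ω * Zhat ω ∂P) - (∫ ω, Yhat ω ∂P) * (∫ ω, Zhat ω ∂P)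
      = (1 / (N : ℝ) ^ 2) * ∑ i,
          ((∑ j ∈ Finset.univ.filter (fun j => 0 < r i j),
            (r i j - p i * q j) * (y i / p i) * (z j / q j))
          + ∑ j ∈ Finset.univ.filter (fun j => r i j = 0), -(y i * z j)) := by
    rw [hIYZ, hIY, hIZ]
    have e : (∑ i, y i) * (∑ j, z j) = ∑ i, ∑ j, y i * z j :=
      Finset.sum_mul_sum _ _ _ _
    have : ((1 / (N : ℝ)) * ∑ i, y i) * ((1 / (N : ℝ)) * ∑ i, z i)
        = (1 / (N : ℝ) ^ 2) * ∑ i, ∑ j, y i * z j := by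
      rw [← e]; ring
    rw [this, ← mul_sub, ← Finset.sum_sub_distrib]
    congr 1
    refine Finset.sum_congr rfl fun i _ => ?_
    rw [← Finset.sum_sub_distrib, hsplit i]
  -- final arithmetic
  set F := fun i => Finset.univ.filter (fun j => 0 < r i j) with hF
  set G := fun i => Finset.univ.filter (fun j => r i j = 0) with hG
  have hEbound₁ : ∀ i : Fin N, -(∑ j ∈ G i, (y i ^ 2 / 2 + z j ^ 2 / 2))
      ≤ ∑ j ∈ G i, -(y i * z j) := by
    intro i
    rw [← Finset.sum_neg_distrib]
    exact Finset.sum_le_sum fun j _ => by nlinarith [sq_nonneg (y i - z j)]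
  have hEbound₂ : ∀ i : Fin N, ∑ j ∈ G i, -(y i * z j)
      ≤ ∑ j ∈ G i, (y i ^ 2 / 2 + z j ^ 2 / 2) :=
    fun i => Finset.sum_le_sum fun j _ => by nlinarith [sq_nonneg (y i + z j)]
  have hn2 : (0 : ℝ) ≤ 1 / (N : ℝ) ^ 2 := by positivity
  constructor
  · rw [integral_sub hCint hDint, hIC, hID, hCov, ← mul_sub]
    apply mul_le_mul_of_nonneg_left _ hn2
    rw [← Finset.sum_sub_distrib]
    refine Finset.sum_le_sum fun i _ => ?_
    have := hEbound₁ i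
    linarith
  · rw [integral_add hCint hDint, hIC, hID, hCov, ← mul_add]
    apply mul_le_mul_of_nonneg_left _ hn2
    rw [← Finset.sum_add_distrib]
    refine Finset.sum_le_sum fun i _ => ?_
    have := hEbound₂ i
    linarith
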